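/- For all x ∈ M and y ∈ N, the identity (sx) ⊗ y − Σ_{k=0}^{p−2} ((s − s_k)x) ⊗ t^k (dy) = s( x ⊗ y ) holds in M ⊗_ℤ N. -/

import Mathlib

open TensorProduct Finset

/-- **Lemma (claim 3).**  Let `p ≥ 2`, let `M`, `N` be abelian groups with endomorphisms
`t_M`, `t_N` of order dividing `p`, and equip `M ⊗_ℤ N` with the diagonal action
`t = t_M ⊗ t_N`.  Writing `d = 1 − t`, `s = 1 + t + ⋯ + t^{p-1}` and
`s_q = 1 + t + ⋯ + t^q`, for all `x ∈ M` and `y ∈ N` one has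
`(sx) ⊗ y − Σ_{k=0}^{p−2} ((s − s_k)x) ⊗ t^k (dy) = s( x ⊗ y )` in `M ⊗_ℤ N`. -/
theorem s_tensor_minus_sum_smash_d
    (p : ℕ) (hp : 2 ≤ p)
    (M N : Type) [AddCommGroup M] [AddCommGroup N]
    (tM : Module.End ℤ M) (tN : Module.End ℤ N)
    (htM : tM ^ p = 1) (htN : tN ^ p = 1)
    (x : M) (y : N) :
    (((∑ j ∈ range p, tM ^ j) x) ⊗ₜ[ℤ] y) -
      ∑ k ∈ range (p - 1),
        ((((∑ j ∈ range p, tM ^ j) - ∑ j ∈ range (k + 1), tM ^ j) x) ⊗ₜ[ℤ]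
          ((tN ^ k) ((1 - tN) y)))
      =
      (∑ j ∈ range p, (TensorProduct.map tM tN) ^ j) (x ⊗ₜ[ℤ] y) := by
  have hP : p - 1 + 1 = p := by omega
  -- right-hand side as a sum of pure tensors
  have key : (∑ j ∈ range p, (TensorProduct.map tM tN) ^ j) (x ⊗ₜ[ℤ] y)
      = ∑ j ∈ range p, (tM ^ j) x ⊗ₜ[ℤ] (tN ^ j) y := by
    rw [LinearMap.sum_apply]
    refine Finset.sum_congr rfl fun j _ => ?_
    rw [TensorProduct.map_pow, TensorProduct.map_tmul]
  rw [key]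
  -- rewrite each summand of the subtracted sum
  have h1 : ∀ k ∈ range (p - 1),
      (((∑ j ∈ range p, tM ^ j) - ∑ j ∈ range (k + 1), tM ^ j) x) ⊗ₜ[ℤ]
          ((tN ^ k) ((1 - tN) y))
        = ∑ j ∈ Ico (k + 1) p, ((tM ^ j) x ⊗ₜ[ℤ] ((tN ^ k) y - (tN ^ (k + 1)) y)) := by
    intro k hk
    rw [mem_range] at hk
    have hx' : ((∑ j ∈ range p, tM ^ j) - ∑ j ∈ range (k + 1), tM ^ j) x
        = ∑ j ∈ Ico (k + 1) p, (tM ^ j) x := by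
      rw [Finset.sum_Ico_eq_sub _ (by omega), LinearMap.sub_apply,
        LinearMap.sum_apply, LinearMap.sum_apply]
    have hy' : (tN ^ k) ((1 - tN) y) = (tN ^ k) y - (tN ^ (k + 1)) y := by
      rw [LinearMap.sub_apply, Module.End.one_apply, map_sub, ← Module.End.mul_apply,
        ← pow_succ]
    rw [hx', hy', TensorProduct.sum_tmul]
  rw [Finset.sum_congr rfl h1]
  -- extend the outer sum to `range p` (the extra term is zero)
  have h2 : ∑ k ∈ range (p - 1),
        ∑ j ∈ Ico (k + 1) p, ((tM ^ j) x ⊗ₜ[ℤ] ((tN ^ k) y - (tN ^ (k + 1)) y))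
      = ∑ k ∈ range p,
        ∑ j ∈ Ico (k + 1) p, ((tM ^ j) x ⊗ₜ[ℤ] ((tN ^ k) y - (tN ^ (k + 1)) y)) := by
    rw [← hP, Finset.sum_range_succ]
    simp [hP]
  rw [h2]
  -- swap the order of summation and telescope
  have h3 : ∑ k ∈ range p,
        ∑ j ∈ Ico (k + 1) p, ((tM ^ j) x ⊗ₜ[ℤ] ((tN ^ k) y - (tN ^ (k + 1)) y))
      = ∑ j ∈ range p, ((tM ^ j) x ⊗ₜ[ℤ] (y - (tN ^ j) y)) := by
    rw [← Nat.Ico_zero_eq_range, Finset.sum_Ico_Ico_comm' 0 p]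
    refine Finset.sum_congr rfl fun j _ => ?_
    rw [Nat.Ico_zero_eq_range, ← TensorProduct.tmul_sum]
    congr 1
    have := Finset.sum_range_sub' (fun k => (tN ^ k) y) j
    simpa using this
  rw [h3, LinearMap.sum_apply, TensorProduct.sum_tmul, ← Finset.sum_sub_distrib]
  refine Finset.sum_congr rfl fun j _ => ?_
  rw [TensorProduct.tmul_sub]
  abel
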